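/- Let ψ be a t-doped stabilizer state on N qubits, i.e. ψ = C_t T_{i_t} C_{t−1} ⋯ C_1 T_{i_1} C_0 (|0⟩^{⊗N}) with each C_j Clifford and each T_{i_j} a T gate on some qubit, and let ρ = |ψ⟩⟨ψ|. Then the probability that a Pauli string sampled from the distribution Π_ρ belongs to the stabilizer group is at least 2^{−t}: Σ_{σ ∈ G_S(ψ)} Π_ρ(σ) = 2^{k_ψ − N} ≥ 2^{−t}. -/
import Mathlib


open Matrix
open scoped ComplexOrder

/-- The four Pauli matrices. -/
noncomputable def pauli : Fin 4 → Matrix (Fin 2) (Fin 2) ℂ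
  | 0 => 1
  | 1 => !![0, 1; 1, 0]
  | 2 => !![0, -Complex.I; Complex.I, 0]
  | 3 => !![1, 0; 0, -1]

/-- The Pauli string `σ^{α 0} ⊗ ⋯ ⊗ σ^{α (N-1)}` as a `2^N × 2^N` matrix,
indexed by computational-basis labels `Fin N → Fin 2`. -/
noncomputable def pauliString {N : ℕ} (α : Fin N → Fin 4) :
    Matrix (Fin N → Fin 2) (Fin N → Fin 2) ℂ :=
  fun s s' => ∏ j, pauli (α j) (s j) (s' j)

/-- The stabilizer group of `ψ`: the Pauli strings of which `ψ` is a `±1` eigenvector. -/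
def stabGroup {N : ℕ} (ψ : (Fin N → Fin 2) → ℂ) :
    Set (Matrix (Fin N → Fin 2) (Fin N → Fin 2) ℂ) :=
  {σ | (∃ α : Fin N → Fin 4, σ = pauliString α) ∧ (σ *ᵥ ψ = ψ ∨ σ *ᵥ ψ = -ψ)}

/-- A unitary `U` is Clifford if it maps every Pauli string to a Pauli string up to a
phase `c ∈ {1, -1, i, -i}` under conjugation. -/
def IsClifford {N : ℕ} (U : Matrix (Fin N → Fin 2) (Fin N → Fin 2) ℂ) : Prop :=
  U ∈ Matrix.unitaryGroup (Fin N → Fin 2) ℂ ∧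
  ∀ α : Fin N → Fin 4, ∃ (β : Fin N → Fin 4) (c : ℂ),
    (c = 1 ∨ c = -1 ∨ c = Complex.I ∨ c = -Complex.I) ∧
    U * pauliString α * Uᴴ = c • pauliString β

/-- The T gate acting on qubit `i`: `I^{⊗(i-1)} ⊗ diag(1, e^{iπ/4}) ⊗ I^{⊗(N-i)}`. -/
noncomputable def Tgate {N : ℕ} (i : Fin N) :
    Matrix (Fin N → Fin 2) (Fin N → Fin 2) ℂ :=
  Matrix.diagonal fun s => if s i = 1 then Complex.exp (Complex.I * Real.pi / 4) else 1

/-- The state `|0⟩^{⊗N}`. -/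
def zeroState (N : ℕ) : (Fin N → Fin 2) → ℂ :=
  fun s => if s = fun _ => 0 then 1 else 0


/-- Pauli label multiplication (Klein four group structure). -/
def mul4 : Fin 4 → Fin 4 → Fin 4
  | 0, 0 => 0 | 0, 1 => 1 | 0, 2 => 2 | 0, 3 => 3
  | 1, 0 => 1 | 1, 1 => 0 | 1, 2 => 3 | 1, 3 => 2
  | 2, 0 => 2 | 2, 1 => 3 | 2, 2 => 0 | 2, 3 => 1
  | 3, 0 => 3 | 3, 1 => 2 | 3, 2 => 1 | 3, 3 => 0

/-- Phase of Pauli multiplication: `pauli a * pauli b = ph4 a b • pauli (mul4 a b)`. -/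
noncomputable def ph4 : Fin 4 → Fin 4 → ℂ
  | 0, 0 => 1 | 0, 1 => 1 | 0, 2 => 1 | 0, 3 => 1
  | 1, 0 => 1 | 1, 1 => 1 | 1, 2 => Complex.I | 1, 3 => -Complex.I
  | 2, 0 => 1 | 2, 1 => -Complex.I | 2, 2 => 1 | 2, 3 => Complex.I
  | 3, 0 => 1 | 3, 1 => Complex.I | 3, 2 => -Complex.I | 3, 3 => 1

lemma pauli_herm (a : Fin 4) : (pauli a)ᴴ = pauli a := by
  fin_cases a <;> ext i j <;> fin_cases i <;> fin_cases j <;>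
    simp [pauli, Matrix.conjTranspose_apply, Matrix.one_apply]

lemma pauli_mul (a b : Fin 4) : pauli a * pauli b = ph4 a b • pauli (mul4 a b) := by
  fin_cases a <;> fin_cases b <;> ext i j <;> fin_cases i <;> fin_cases j <;>
    simp [pauli, mul4, ph4, Matrix.mul_apply, Fin.sum_univ_two, Matrix.one_apply] <;> ring

lemma ph4_ne_zero (a b : Fin 4) : ph4 a b ≠ 0 := by
  fin_cases a <;> fin_cases b <;> simp [ph4, Complex.I_ne_zero]

lemma mul4_self (a : Fin 4) : mul4 a a = 0 := by fin_cases a <;> rfl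

lemma ph4_self (a : Fin 4) : ph4 a a = 1 := by fin_cases a <;> rfl

lemma mul4_left_injective (a : Fin 4) : Function.Injective (mul4 a) := by
  fin_cases a <;> decide

lemma mul4_mem03 {a b : Fin 4} (ha : a = 1 ∨ a = 2) (hb : b = 1 ∨ b = 2) :
    mul4 a b = 0 ∨ mul4 a b = 3 := by
  rcases ha with rfl | rfl <;> rcases hb with rfl | rfl <;> simp [mul4]

lemma pauli_trace_mul (a b : Fin 4) :
    Matrix.trace (pauli a * pauli b) = if a = b then 2 else 0 := by
  fin_cases a <;> fin_cases b <;>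
    simp [pauli, Matrix.trace, Matrix.mul_apply, Fin.sum_univ_two, Matrix.diag,
      Matrix.one_apply] <;> ring_nf <;> simp [Complex.I_sq]

variable {N : ℕ}

lemma pauliString_mul_apply (α β : Fin N → Fin 4) (s s' : Fin N → Fin 2) :
    (pauliString α * pauliString β) s s'
      = ∏ j, (pauli (α j) * pauli (β j)) (s j) (s' j) := by
  rw [Matrix.mul_apply]
  have : ∀ j : Fin N, (pauli (α j) * pauli (β j)) (s j) (s' j)
      = ∑ x : Fin 2, pauli (α j) (s j) x * pauli (β j) x (s' j) := fun j =>
    Matrix.mul_apply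
  simp_rw [this]
  rw [Finset.prod_univ_sum]
  rw [Fintype.piFinset_univ]
  apply Finset.sum_congr rfl
  intro x _
  rw [pauliString, pauliString, ← Finset.prod_mul_distrib]

lemma pauliString_mul (α β : Fin N → Fin 4) :
    pauliString α * pauliString β
      = (∏ j, ph4 (α j) (β j)) • pauliString (fun j => mul4 (α j) (β j)) := by
  ext s s'
  rw [pauliString_mul_apply]
  simp only [Matrix.smul_apply, smul_eq_mul, pauliString]
  simp_rw [pauli_mul, Matrix.smul_apply, smul_eq_mul]
  rw [Finset.prod_mul_distrib]

lemma pauliString_zero : pauliString (fun _ : Fin N => 0) = 1 := by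
  ext s s'
  simp only [pauliString, Matrix.one_apply]
  by_cases h : s = s'
  · subst h
    rw [if_pos rfl]
    apply Finset.prod_eq_one
    intro j _
    simp [pauli, Matrix.one_apply]
  · rw [if_neg h]
    obtain ⟨j, hj⟩ := Function.ne_iff.mp h
    exact Finset.prod_eq_zero (Finset.mem_univ j) (by simp [pauli, Matrix.one_apply, hj])

lemma pauliString_sq (α : Fin N → Fin 4) : pauliString α * pauliString α = 1 := by
  rw [pauliString_mul]
  simp [ph4_self, mul4_self, pauliString_zero]

lemma trace_pauliString_mul (α β : Fin N → Fin 4) :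
    Matrix.trace (pauliString α * pauliString β) = if α = β then (2:ℂ)^N else 0 := by
  rw [Matrix.trace]
  have : ∀ s : Fin N → Fin 2, (pauliString α * pauliString β).diag s
      = ∏ j, (pauli (α j) * pauli (β j)) (s j) (s j) := fun s =>
    pauliString_mul_apply α β s s
  simp_rw [this]
  rw [← Fintype.piFinset_univ,
    ← Finset.prod_univ_sum (fun _ => Finset.univ) (fun j x => (pauli (α j) * pauli (β j)) x x)]
  have h2 : ∀ j : Fin N, (∑ x ∈ Finset.univ, (pauli (α j) * pauli (β j)) x x)
      = if α j = β j then (2:ℂ) else 0 := by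
    intro j
    have := pauli_trace_mul (α j) (β j)
    rw [Matrix.trace] at this
    simpa [Matrix.diag] using this
  simp_rw [h2]
  by_cases h : α = β
  · subst h; simp
  · rw [if_neg h]
    obtain ⟨j, hj⟩ := Function.ne_iff.mp h
    exact Finset.prod_eq_zero (Finset.mem_univ j) (by rw [if_neg hj])

lemma pauliString_inj_of_smul {α β : Fin N → Fin 4} {c : ℂ}
    (h : c • pauliString α = pauliString β) : α = β := by
  by_contra hne
  have h1 := congrArg (fun M => Matrix.trace (M * pauliString β)) h
  simp only [Matrix.smul_mul, Matrix.trace_smul, trace_pauliString_mul, smul_eq_mul] at h1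
  rw [if_neg hne] at h1
  have h2 : (2:ℂ)^N = 0 := by simpa using h1.symm
  exact (by positivity : (2:ℂ)^N ≠ 0) h2


/-- The stabilizer group at the level of Pauli labels. -/
def stabL (ψ : (Fin N → Fin 2) → ℂ) : Set (Fin N → Fin 4) :=
  {α | pauliString α *ᵥ ψ = ψ ∨ pauliString α *ᵥ ψ = -ψ}

lemma eig_pm {α : Fin N → Fin 4} {ψ : (Fin N → Fin 2) → ℂ} (hψ : ψ ≠ 0) {c : ℂ}
    (h : pauliString α *ᵥ ψ = c • ψ) : c = 1 ∨ c = -1 := by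
  have h2 : pauliString α *ᵥ (pauliString α *ᵥ ψ) = c • (c • ψ) := by
    rw [h, Matrix.mulVec_smul, h]
  rw [Matrix.mulVec_mulVec, pauliString_sq, Matrix.one_mulVec, smul_smul] at h2
  have h3 : (c * c - 1) • ψ = 0 := by
    rw [sub_smul, one_smul, ← h2, sub_self]
  have hc2 : c * c = 1 := by
    rcases smul_eq_zero.mp h3 with h4 | h4
    · linear_combination h4
    · exact absurd h4 hψ
  have : (c - 1) * (c + 1) = 0 := by ring_nf; linear_combination hc2
  rcases mul_eq_zero.mp this with h4 | h4
  · left; linear_combination h4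
  · right; linear_combination h4

lemma mem_stabL_of_smul {α : Fin N → Fin 4} {ψ : (Fin N → Fin 2) → ℂ} (hψ : ψ ≠ 0)
    {c : ℂ} (h : pauliString α *ᵥ ψ = c • ψ) : α ∈ stabL ψ := by
  rcases eig_pm hψ h with rfl | rfl
  · left; simpa using h
  · right; rw [h]; simp

lemma stabL_smul_eigen {α : Fin N → Fin 4} {ψ : (Fin N → Fin 2) → ℂ}
    (h : α ∈ stabL ψ) : ∃ c : ℂ, (c = 1 ∨ c = -1) ∧ pauliString α *ᵥ ψ = c • ψ := by
  rcases h with h | h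
  · exact ⟨1, Or.inl rfl, by simpa using h⟩
  · exact ⟨-1, Or.inr rfl, by simpa using h⟩

lemma stabL_mul {ψ : (Fin N → Fin 2) → ℂ} (hψ : ψ ≠ 0) {α β : Fin N → Fin 4}
    (hα : α ∈ stabL ψ) (hβ : β ∈ stabL ψ) :
    (fun j => mul4 (α j) (β j)) ∈ stabL ψ := by
  obtain ⟨cα, _, hα'⟩ := stabL_smul_eigen hα
  obtain ⟨cβ, _, hβ'⟩ := stabL_smul_eigen hβ
  set d : ℂ := ∏ j, ph4 (α j) (β j) with hd
  have hdne : d ≠ 0 := Finset.prod_ne_zero_iff.mpr fun j _ => ph4_ne_zero _ _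
  have hmul := pauliString_mul α β
  have h1 : pauliString α *ᵥ (pauliString β *ᵥ ψ)
      = d • (pauliString (fun j => mul4 (α j) (β j)) *ᵥ ψ) := by
    rw [Matrix.mulVec_mulVec, hmul, Matrix.smul_mulVec]
  have h2 : pauliString α *ᵥ (pauliString β *ᵥ ψ) = (cα * cβ) • ψ := by
    rw [hβ', Matrix.mulVec_smul, hα', smul_smul, mul_comm]
  have h3 : pauliString (fun j => mul4 (α j) (β j)) *ᵥ ψ = (d⁻¹ * (cα * cβ)) • ψ := by
    have := h1.symm.trans h2
    rw [mul_smul, ← this, smul_smul, inv_mul_cancel₀ hdne, one_smul]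
  exact mem_stabL_of_smul hψ h3

lemma clifford_phase_ne_zero {c : ℂ}
    (h : c = 1 ∨ c = -1 ∨ c = Complex.I ∨ c = -Complex.I) : c ≠ 0 := by
  rcases h with rfl | rfl | rfl | rfl <;> simp [Complex.I_ne_zero]

lemma mulVec_ne_zero_of_unitary {U : Matrix (Fin N → Fin 2) (Fin N → Fin 2) ℂ}
    (hU : U ∈ Matrix.unitaryGroup (Fin N → Fin 2) ℂ) {ψ : (Fin N → Fin 2) → ℂ}
    (hψ : ψ ≠ 0) : U *ᵥ ψ ≠ 0 := by
  intro h
  apply hψ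
  have h1 : star U * U = 1 := (Unitary.mem_iff.mp hU).1
  have := congrArg (fun v => star U *ᵥ v) h
  simpa [Matrix.mulVec_mulVec, h1] using this

lemma stabL_ncard_le_clifford {U : Matrix (Fin N → Fin 2) (Fin N → Fin 2) ℂ}
    (hU : IsClifford U) {ψ : (Fin N → Fin 2) → ℂ} (hψ : ψ ≠ 0) :
    (stabL ψ).ncard ≤ (stabL (U *ᵥ ψ)).ncard := by
  obtain ⟨hUu, hUc⟩ := hU
  choose β c hc hconj using hUc
  have hUs : star U * U = 1 := (Unitary.mem_iff.mp hUu).1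
  have hUs' : U * star U = 1 := (Unitary.mem_iff.mp hUu).2
  have hstar : Uᴴ = star U := rfl
  -- injectivity of β
  have hβinj : Function.Injective β := by
    intro α₁ α₂ hβ
    have e1 : U * pauliString α₁ * Uᴴ = c α₁ • pauliString (β α₁) := hconj α₁
    have e2 : U * pauliString α₂ * Uᴴ = c α₂ • pauliString (β α₂) := hconj α₂
    have cancel : ∀ M : Matrix (Fin N → Fin 2) (Fin N → Fin 2) ℂ,
        star U * (U * M * star U) * U = M := by
      intro M
      have : star U * (U * M * star U) * U = (star U * U) * M * (star U * U) := by
        noncomm_ring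
      rw [this, hUs, one_mul, mul_one]
    have key : (c α₂) • pauliString α₁ = (c α₁) • pauliString α₂ := by
      have r1 : pauliString α₁ = star U * (c α₁ • pauliString (β α₁)) * U := by
        rw [← e1, hstar, cancel]
      have r2 : pauliString α₂ = star U * (c α₂ • pauliString (β α₂)) * U := by
        rw [← e2, hstar, cancel]
      rw [r1, r2, hβ]
      simp only [Matrix.mul_smul, Matrix.smul_mul, smul_smul]
      rw [mul_comm]
    -- use trace orthogonality
    by_contra hne
    have h1 := congrArg (fun M => Matrix.trace (M * pauliString α₁)) key
    simp only [Matrix.smul_mul, Matrix.trace_smul, smul_eq_mul,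
      trace_pauliString_mul] at h1
    rw [if_neg (show ¬(α₂ = α₁) from fun hh => hne hh.symm)] at h1
    simp only [if_true, mul_zero] at h1
    have h2N : (2:ℂ)^N ≠ 0 := by positivity
    rcases mul_eq_zero.mp h1 with h | h
    · exact clifford_phase_ne_zero (hc α₂) h
    · exact h2N h
  -- membership of image
  have hmem : ∀ a ∈ stabL ψ, β a ∈ stabL (U *ᵥ ψ) := by
    intro a ha
    obtain ⟨ca, _, ha'⟩ := stabL_smul_eigen ha
    have hc0 := clifford_phase_ne_zero (hc a)
    have e : U * pauliString a * Uᴴ = c a • pauliString (β a) := hconj a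
    have h1 : (c a • pauliString (β a)) *ᵥ (U *ᵥ ψ) = ca • (U *ᵥ ψ) := by
      rw [← e]
      rw [Matrix.mulVec_mulVec, hstar]
      have : U * pauliString a * star U * U = U * pauliString a := by
        rw [mul_assoc, hUs, mul_one]
      rw [this, ← Matrix.mulVec_mulVec, ha', Matrix.mulVec_smul]
    have h2 : pauliString (β a) *ᵥ (U *ᵥ ψ) = ((c a)⁻¹ * ca) • (U *ᵥ ψ) := by
      have := h1
      rw [Matrix.smul_mulVec] at this
      rw [mul_smul, ← this, smul_smul, inv_mul_cancel₀ hc0, one_smul]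
    exact mem_stabL_of_smul (mulVec_ne_zero_of_unitary hUu hψ) h2
  calc (stabL ψ).ncard = (β '' stabL ψ).ncard :=
        (Set.ncard_image_of_injective _ hβinj).symm
    _ ≤ (stabL (U *ᵥ ψ)).ncard :=
        Set.ncard_le_ncard (fun x ⟨a, ha, hax⟩ => hax ▸ hmem a ha) (Set.toFinite _)

lemma pauli_diag_entry_zero {a : Fin 4} (ha : a = 0 ∨ a = 3) {x y : Fin 2}
    (hxy : x ≠ y) : pauli a x y = 0 := by
  rcases ha with rfl | rfl <;> fin_cases x <;> fin_cases y <;>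
    simp_all [pauli, Matrix.one_apply]

lemma pauliString_commute_Tgate {α : Fin N → Fin 4} {i : Fin N}
    (hi : α i = 0 ∨ α i = 3) :
    pauliString α * Tgate i = Tgate i * pauliString α := by
  ext s s'
  rw [Tgate, Matrix.mul_diagonal, Matrix.diagonal_mul]
  by_cases h : s i = s' i
  · simp only [h]; ring
  · have : pauliString α s s' = 0 :=
      Finset.prod_eq_zero (Finset.mem_univ i) (pauli_diag_entry_zero hi h)
    rw [this, mul_zero, zero_mul]

lemma two_mul_stabL_Tgate {ψ : (Fin N → Fin 2) → ℂ} (hψ : ψ ≠ 0) (i : Fin N) :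
    (stabL ψ).ncard ≤ 2 * (stabL (Tgate i *ᵥ ψ)).ncard := by
  classical
  set S : Set (Fin N → Fin 4) := stabL ψ
  set S0 : Set (Fin N → Fin 4) := {α ∈ S | α i = 0 ∨ α i = 3}
  have hS0sub : S0 ⊆ S := fun a ha => ha.1
  have hS0T : S0 ⊆ stabL (Tgate i *ᵥ ψ) := by
    rintro a ⟨haS, hai⟩
    obtain ⟨ca, hca, ha'⟩ := stabL_smul_eigen haS
    have h1 : pauliString a *ᵥ (Tgate i *ᵥ ψ) = ca • (Tgate i *ᵥ ψ) := by
      rw [Matrix.mulVec_mulVec, pauliString_commute_Tgate hai, ← Matrix.mulVec_mulVec,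
        ha', Matrix.mulVec_smul]
    rcases hca with rfl | rfl
    · left; simpa using h1
    · right; rw [h1]; simp
  have hsplit : (S \ S0).ncard + S0.ncard = S.ncard :=
    Set.ncard_diff_add_ncard_of_subset hS0sub (Set.toFinite _)
  have h10 : (S \ S0).ncard ≤ S0.ncard := by
    rcases Set.eq_empty_or_nonempty (S \ S0) with h | ⟨a0, ha0⟩
    · simp [h]
    · obtain ⟨ha0S, ha0n⟩ := ha0
      have ha0i : a0 i = 1 ∨ a0 i = 2 := by
        have h' : ¬(a0 i = 0 ∨ a0 i = 3) := fun hh => ha0n ⟨ha0S, hh⟩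
        revert h'; generalize a0 i = x; revert x; decide
      set g : (Fin N → Fin 4) → (Fin N → Fin 4) := fun b j => mul4 (a0 j) (b j)
      have hginj : Function.Injective g := by
        intro b1 b2 hb
        funext j
        exact mul4_left_injective (a0 j) (congrFun hb j)
      have himg : g '' (S \ S0) ⊆ S0 := by
        rintro x ⟨b, ⟨hbS, hbn⟩, rfl⟩
        have hbi : b i = 1 ∨ b i = 2 := by
          have h' : ¬(b i = 0 ∨ b i = 3) := fun hh => hbn ⟨hbS, hh⟩
          revert h'; generalize b i = x; revert x; decide
        exact ⟨stabL_mul hψ ha0S hbS, mul4_mem03 ha0i hbi⟩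
      calc (S \ S0).ncard = (g '' (S \ S0)).ncard :=
            (Set.ncard_image_of_injective _ hginj).symm
        _ ≤ S0.ncard := Set.ncard_le_ncard himg (Set.toFinite _)
  have h2 : S0.ncard ≤ (stabL (Tgate i *ᵥ ψ)).ncard :=
    Set.ncard_le_ncard hS0T (Set.toFinite _)
  omega

lemma pauli_col_zero {a : Fin 4} (ha : a = 0 ∨ a = 3) (x : Fin 2) :
    pauli a x 0 = if x = 0 then 1 else 0 := by
  rcases ha with rfl | rfl <;> fin_cases x <;> simp [pauli, Matrix.one_apply]

lemma zeroState_stab {α : Fin N → Fin 4} (hα : ∀ j, α j = 0 ∨ α j = 3) :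
    α ∈ stabL (zeroState N) := by
  left
  funext s
  rw [Matrix.mulVec]
  show (fun j => pauliString α s j) ⬝ᵥ zeroState N = _
  rw [dotProduct]
  have : ∀ s' : Fin N → Fin 2, pauliString α s s' * zeroState N s'
      = if s' = (fun _ => 0) then pauliString α s (fun _ => 0) else 0 := by
    intro s'
    by_cases h : s' = fun _ => 0 <;> simp [zeroState, h]
  simp_rw [this]
  rw [Finset.sum_ite_eq' Finset.univ (fun _ => (0:Fin 2)) (fun _ => pauliString α s _)]
  simp only [Finset.mem_univ, if_true]
  rw [pauliString, zeroState]
  simp_rw [fun j => pauli_col_zero (hα j) (s j)]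
  by_cases h : s = fun _ => 0
  · rw [if_pos h]
    apply Finset.prod_eq_one
    intro j _
    rw [if_pos (congrFun h j)]
  · rw [if_neg h]
    obtain ⟨j, hj⟩ := Function.ne_iff.mp h
    exact Finset.prod_eq_zero (Finset.mem_univ j) (by rw [if_neg hj])

lemma zeroState_stab_card : 2^N ≤ (stabL (zeroState N)).ncard := by
  classical
  set h : Fin 2 → Fin 4 := ![0, 3]
  have hinj : Function.Injective h := by decide
  set g : (Fin N → Fin 2) → (Fin N → Fin 4) := fun s j => h (s j)
  have hginj : Function.Injective g := fun s1 s2 hs =>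
    funext fun j => hinj (congrFun hs j)
  have himg : g '' Set.univ ⊆ stabL (zeroState N) := by
    rintro x ⟨s, _, rfl⟩
    apply zeroState_stab
    intro j
    have hall : ∀ x : Fin 2, h x = 0 ∨ h x = 3 := by decide
    exact hall (s j)
  calc (2:ℕ)^N = (Set.univ : Set (Fin N → Fin 2)).ncard := by
        rw [Set.ncard_univ, Nat.card_eq_fintype_card]
        simp [Fintype.card_fun]
    _ = (g '' Set.univ).ncard := (Set.ncard_image_of_injective _ hginj).symm
    _ ≤ _ := Set.ncard_le_ncard himg (Set.toFinite _)

lemma zeroState_norm : star (zeroState N) ⬝ᵥ zeroState N = 1 := by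
  rw [dotProduct]
  have : ∀ s : Fin N → Fin 2, star (zeroState N) s * zeroState N s
      = if s = (fun _ => 0) then 1 else 0 := by
    intro s
    by_cases h : s = fun _ => 0 <;> simp [zeroState, h]
  simp_rw [this]
  rw [Finset.sum_ite_eq' Finset.univ (fun _ => (0:Fin 2)) (fun _ => (1:ℂ))]
  simp

lemma zeroState_ne_zero : (zeroState N) ≠ 0 := by
  intro h
  have := congrFun h (fun _ => 0)
  simp [zeroState] at this

lemma norm_mulVec_unitary {U : Matrix (Fin N → Fin 2) (Fin N → Fin 2) ℂ}
    (hU : Uᴴ * U = 1) (v : (Fin N → Fin 2) → ℂ) :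
    star (U *ᵥ v) ⬝ᵥ (U *ᵥ v) = star v ⬝ᵥ v := by
  rw [Matrix.star_mulVec, ← Matrix.dotProduct_mulVec, Matrix.mulVec_mulVec, hU,
    Matrix.one_mulVec]

lemma Tgate_unitary (i : Fin N) : (Tgate i)ᴴ * Tgate i = 1 := by
  rw [Tgate, Matrix.diagonal_conjTranspose, Matrix.diagonal_mul_diagonal]
  rw [← Matrix.diagonal_one, Matrix.diagonal_eq_diagonal_iff]
  intro s
  by_cases h : s i = 1
  · simp only [Pi.star_apply, h, if_true, Complex.star_def]
    rw [← Complex.exp_conj, ← Complex.exp_add]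
    have hc : (starRingEnd ℂ) (Complex.I * Real.pi / 4) = -(Complex.I * Real.pi / 4) := by
      rw [map_div₀, _root_.map_mul, Complex.conj_I, Complex.conj_ofReal,
        show (starRingEnd ℂ) 4 = 4 from Complex.conj_ofNat 4]
      ring
    rw [hc]
    simp
  · simp [h]

lemma pauliString_injective : Function.Injective (pauliString (N := N)) :=
  fun α β h => pauliString_inj_of_smul (c := 1) (by rw [one_smul, h])

lemma stabGroup_eq (ψ : (Fin N → Fin 2) → ℂ) :
    stabGroup ψ = pauliString '' stabL ψ := by
  ext σ
  constructor
  · rintro ⟨⟨α, rfl⟩, h⟩; exact ⟨α, h, rfl⟩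
  · rintro ⟨α, hα, rfl⟩; exact ⟨⟨α, rfl⟩, hα⟩

lemma trace_rho_sigma (ψ : (Fin N → Fin 2) → ℂ)
    (σ : Matrix (Fin N → Fin 2) (Fin N → Fin 2) ℂ) :
    Matrix.trace (Matrix.vecMulVec ψ (star ψ) * σ) = star ψ ⬝ᵥ (σ *ᵥ ψ) := by
  rw [Matrix.trace]
  simp only [Matrix.diag, Matrix.mul_apply, Matrix.vecMulVec_apply]
  rw [Finset.sum_comm, dotProduct]
  simp only [Matrix.mulVec, dotProduct]
  rw [Finset.sum_congr rfl]
  intro s' _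
  rw [Finset.mul_sum]
  apply Finset.sum_congr rfl
  intro s _
  ring

/-- For a t-doped stabilizer state
`ψ = C_t T_{i_t} C_{t-1} ⋯ C_1 T_{i_1} C_0 |0⟩^{⊗N}` with `ρ = |ψ⟩⟨ψ|`, the probability
that a Pauli string sampled from `Π_ρ(σ) = Tr[ρσ]² / 2^N` lies in the stabilizer group
is at least `2^{-t}`: `∑_{σ ∈ G_S(ψ)} Π_ρ(σ) ≥ 1 / 2^t`. -/
theorem stabGroup_sampling_prob_tDoped {N t : ℕ}
    (C : ℕ → Matrix (Fin N → Fin 2) (Fin N → Fin 2) ℂ)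
    (idx : ℕ → Fin N)
    (hC : ∀ j ≤ t, IsClifford (C j))
    (φ : ℕ → (Fin N → Fin 2) → ℂ)
    (hφ0 : φ 0 = C 0 *ᵥ zeroState N)
    (hφ : ∀ j < t, φ (j + 1) = C (j + 1) *ᵥ (Tgate (idx (j + 1)) *ᵥ φ j))
    (ψ : (Fin N → Fin 2) → ℂ) (hψ : ψ = φ t) :
    (1 / 2 ^ t : ℂ) ≤
      ∑ᶠ σ ∈ stabGroup ψ,
        Matrix.trace (Matrix.vecMulVec ψ (star ψ) * σ) ^ 2 / 2 ^ N := by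
  classical
  have hCu : ∀ j ≤ t, (C j)ᴴ * C j = 1 := fun j hj =>
    (Unitary.mem_iff.mp ((hC j hj).1)).1
  -- main induction
  have main : ∀ j, j ≤ t →
      star (φ j) ⬝ᵥ φ j = 1 ∧ 2^N ≤ 2^j * (stabL (φ j)).ncard := by
    intro j
    induction j with
    | zero =>
      intro _
      constructor
      · rw [hφ0, norm_mulVec_unitary (hCu 0 (Nat.zero_le t)), zeroState_norm]
      · rw [hφ0]
        have h1 := stabL_ncard_le_clifford (hC 0 (Nat.zero_le t)) zeroState_ne_zero
        have h2 := zeroState_stab_card (N := N)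
        simpa using le_trans h2 h1
    | succ j ih =>
      intro hj
      have hj' : j ≤ t := by omega
      have hjt : j < t := by omega
      obtain ⟨hn, hcard⟩ := ih hj'
      have hφjne : φ j ≠ 0 := by
        intro h
        rw [h] at hn
        simp at hn
      have hTn : star (Tgate (idx (j+1)) *ᵥ φ j) ⬝ᵥ (Tgate (idx (j+1)) *ᵥ φ j) = 1 := by
        rw [norm_mulVec_unitary (Tgate_unitary _), hn]
      have hTne : Tgate (idx (j+1)) *ᵥ φ j ≠ 0 := by
        intro h
        rw [h] at hTn
        simp at hTn
      constructor
      · rw [hφ j hjt, norm_mulVec_unitary (hCu (j+1) hj), hTn]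
      · rw [hφ j hjt]
        have h1 := two_mul_stabL_Tgate hφjne (idx (j+1))
        have h2 := stabL_ncard_le_clifford (hC (j+1) hj) hTne
        calc (2:ℕ)^N ≤ 2^j * (stabL (φ j)).ncard := hcard
          _ ≤ 2^j * (2 * (stabL (Tgate (idx (j+1)) *ᵥ φ j)).ncard) :=
              Nat.mul_le_mul_left _ h1
          _ = 2^(j+1) * (stabL (Tgate (idx (j+1)) *ᵥ φ j)).ncard := by ring
          _ ≤ 2^(j+1) * (stabL (C (j+1) *ᵥ (Tgate (idx (j+1)) *ᵥ φ j))).ncard :=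
              Nat.mul_le_mul_left _ h2
  obtain ⟨hn1, hcard⟩ := main t le_rfl
  rw [← hψ] at hn1 hcard
  -- evaluate the sum
  have hfin : (stabGroup ψ).Finite := by
    rw [stabGroup_eq]
    exact (Set.toFinite _).image _
  rw [finsum_mem_eq_finite_toFinset_sum _ hfin]
  have hconst : ∀ σ ∈ hfin.toFinset,
      Matrix.trace (Matrix.vecMulVec ψ (star ψ) * σ) ^ 2 / 2 ^ N = 1 / 2^N := by
    intro σ hσ
    rw [Set.Finite.mem_toFinset] at hσ
    obtain ⟨⟨α, rfl⟩, hst⟩ := hσ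
    rw [trace_rho_sigma]
    rcases hst with h | h
    · rw [h, hn1]; norm_num
    · rw [h, dotProduct_neg, hn1]; norm_num
  rw [Finset.sum_congr rfl hconst, Finset.sum_const]
  have hcardeq : hfin.toFinset.card = (stabL ψ).ncard := by
    rw [← Set.ncard_eq_toFinset_card _ hfin, stabGroup_eq,
      Set.ncard_image_of_injective _ pauliString_injective]
  rw [hcardeq, nsmul_eq_mul]
  set n := (stabL ψ).ncard with hn
  -- numeric conclusion
  have hreal : ((1:ℝ)/2^t) ≤ (n : ℝ) * (1/2^N) := by
    rw [mul_one_div, div_le_div_iff₀ (by positivity) (by positivity)]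
    have : (2:ℝ)^N ≤ 2^t * n := by exact_mod_cast hcard
    calc (1:ℝ) * 2^N = 2^N := one_mul _
      _ ≤ 2^t * n := this
      _ = n * 2^t := mul_comm _ _
  calc (1 / 2 ^ t : ℂ) = ((1/2^t : ℝ) : ℂ) := by push_cast; ring
    _ ≤ (((n : ℝ) * (1/2^N) : ℝ) : ℂ) := by
        exact_mod_cast Complex.real_le_real.mpr hreal
    _ = (n : ℂ) * (1/2^N) := by push_cast; ring
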